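/- Let (F_k) be a sequence of density functions in the determinantal class, let F(λ) = liminf_k F_k(λ), and let F⁺ be F made right-continuous, i.e. F⁺(λ) = lim_{ε→0⁺} F(λ+ε). Assume F⁺ is in the determinantal class, that there is a constant C with F_k(λ) = F_l(λ) for all k, l ≥ 1 and λ > C, and that lim_k F_k(0) = F⁺(0). Then limsup_{k→∞} det(F_k) ≤ det(F⁺). -/

import Mathlib

open MeasureTheory Filter
open scoped Classical
open Set
open scoped ENNReal Topology

lemma aux_swap (μ : Measure ℝ) [SigmaFinite μ] {b : ℝ} (hb : 0 < b) :
    ∫⁻ x in Ioc 0 b, ENNReal.ofReal (Real.log b - Real.log x) ∂μ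
      = ∫⁻ t in Ioc 0 b, ENNReal.ofReal t⁻¹ * μ (Ioc 0 t) := by
  set f : ℝ → ℝ → ℝ≥0∞ := fun x t =>
    ({p : ℝ × ℝ | p.1 ≤ p.2 ∧ p.2 ≤ b}.indicator (fun p => ENNReal.ofReal p.2⁻¹)) (x, t) with hf
  have hS : MeasurableSet {p : ℝ × ℝ | p.1 ≤ p.2 ∧ p.2 ≤ b} := by
    exact (measurableSet_le measurable_fst measurable_snd).inter
      (measurable_snd measurableSet_Iic)
  have hfmeas : Measurable (Function.uncurry f) := by
    have : Function.uncurry f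
        = {p : ℝ × ℝ | p.1 ≤ p.2 ∧ p.2 ≤ b}.indicator (fun p => ENNReal.ofReal p.2⁻¹) := rfl
    rw [this]
    exact (ENNReal.measurable_ofReal.comp (measurable_snd.inv)).indicator hS
  have step1 : ∫⁻ x in Ioc 0 b, ENNReal.ofReal (Real.log b - Real.log x) ∂μ
      = ∫⁻ x in Ioc 0 b, (∫⁻ t, f x t) ∂μ := by
    refine setLIntegral_congr_fun measurableSet_Ioc ?_
    intro x hx
    have hx0 : 0 < x := hx.1
    have hxb : x ≤ b := hx.2
    have h1 : (fun t => f x t) = (Icc x b).indicator (fun t => ENNReal.ofReal t⁻¹) := by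
      ext t
      simp only [hf, Set.indicator, mem_setOf_eq, mem_Icc]
    have h2 : ∫⁻ t, f x t = ∫⁻ t in Icc x b, ENNReal.ofReal t⁻¹ := by
      rw [h1, lintegral_indicator measurableSet_Icc]
    have h3 : ∫⁻ t in Icc x b, ENNReal.ofReal t⁻¹ = ∫⁻ t in Ioc x b, ENNReal.ofReal t⁻¹ :=
      (setLIntegral_congr Ioc_ae_eq_Icc).symm
    have hint : IntegrableOn (fun t : ℝ => t⁻¹) (Ioc x b) volume := by
      have : IntervalIntegrable (fun t : ℝ => t⁻¹) volume x b := by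
        rw [intervalIntegrable_inv_iff]
        right
        intro h0
        rcases h0 with ⟨h0l, _⟩
        simp only [inf_le_iff] at h0l
        rcases h0l with h | h <;> linarith
      exact (intervalIntegrable_iff_integrableOn_Ioc_of_le hxb).mp this
    have h4 : ∫⁻ t in Ioc x b, ENNReal.ofReal t⁻¹
        = ENNReal.ofReal (∫ t in Ioc x b, t⁻¹) := by
      rw [← ofReal_integral_eq_lintegral_ofReal hint]
      exact ((ae_restrict_iff' measurableSet_Ioc).2 (Filter.Eventually.of_forall
        (fun t ht => le_of_lt (inv_pos.2 (hx0.trans ht.1)))))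
    have h5 : ∫ t in Ioc x b, (t : ℝ)⁻¹ = Real.log b - Real.log x := by
      rw [← intervalIntegral.integral_of_le hxb, integral_inv]
      · rw [Real.log_div (ne_of_gt (hx0.trans_le hxb)) (ne_of_gt hx0)]
      · intro h0
        rcases h0 with ⟨h0l, _⟩
        simp only [inf_le_iff] at h0l
        rcases h0l with h | h <;> linarith
    beta_reduce; rw [h2, h3, h4, h5]
  have step2 : ∫⁻ x in Ioc 0 b, (∫⁻ t, f x t) ∂μ
      = ∫⁻ t, (∫⁻ x in Ioc 0 b, f x t ∂μ) := by
    exact lintegral_lintegral_swap hfmeas.aemeasurable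
  have step3 : ∀ t : ℝ, (∫⁻ x in Ioc 0 b, f x t ∂μ)
      = (Ioc 0 b).indicator (fun t => ENNReal.ofReal t⁻¹ * μ (Ioc 0 t)) t := by
    intro t
    by_cases htb : t ≤ b
    · have h1 : (fun x => f x t) = (Iic t).indicator (fun _ => ENNReal.ofReal t⁻¹) := by
        ext x
        simp only [hf, Set.indicator, mem_setOf_eq, mem_Iic, htb, and_true]
      rw [h1, lintegral_indicator measurableSet_Iic, Measure.restrict_restrict measurableSet_Iic,
        setLIntegral_const]
      by_cases ht0 : 0 < t
      · have : Iic t ∩ Ioc 0 b = Ioc 0 t := by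
          ext x
          simp only [mem_inter_iff, mem_Iic, mem_Ioc]
          constructor
          · rintro ⟨h1, h2, _⟩; exact ⟨h2, h1⟩
          · rintro ⟨h1, h2⟩; exact ⟨h2, h1, h2.trans htb⟩
        rw [this, indicator_of_mem (by exact ⟨ht0, htb⟩)]
      · have : Iic t ∩ Ioc 0 b = ∅ := by
          ext x
          simp only [mem_inter_iff, mem_Iic, mem_Ioc, mem_empty_iff_false, iff_false]
          rintro ⟨h1, h2, _⟩
          exact ht0 (lt_of_lt_of_le h2 h1)
        rw [this, indicator_of_notMem (by simp [mem_Ioc]; intro h; exact absurd h ht0)]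
        simp
    · have h1 : (fun x => f x t) = fun _ => (0 : ℝ≥0∞) := by
        ext x
        simp only [hf, Set.indicator, mem_setOf_eq, htb, and_false, if_false]
      rw [h1, lintegral_const, zero_mul, indicator_of_notMem]
      simp only [mem_Ioc, not_and]
      intro _ h
      exact htb h
  rw [step1, step2]
  have step4 : ∀ t : ℝ, (∫⁻ x in Ioc 0 b, f x t ∂μ)
      = (Ioc 0 b).indicator (fun t => ENNReal.ofReal t⁻¹ * μ (Ioc 0 t)) t := step3
  calc ∫⁻ t, (∫⁻ x in Ioc 0 b, f x t ∂μ)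
      = ∫⁻ t, (Ioc 0 b).indicator (fun t => ENNReal.ofReal t⁻¹ * μ (Ioc 0 t)) t := by
        exact lintegral_congr step4
    _ = ∫⁻ t in Ioc 0 b, ENNReal.ofReal t⁻¹ * μ (Ioc 0 t) :=
        lintegral_indicator measurableSet_Ioc _

lemma aux_tail (f : StieltjesFunction ℝ) {b : ℝ} (h : ∀ x, b < x → f x = f b) :
    f.measure (Ioi b) = 0 := by
  have hsub : Ioi b ⊆ ⋃ n : ℕ, Ioc b (b + (n + 1)) := by
    intro x hx
    simp only [mem_iUnion, mem_Ioc]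
    exact ⟨⌈x - b⌉₊, hx, by
      have := Nat.le_ceil (x - b)
      have : x - b ≤ (⌈x - b⌉₊ : ℝ) := Nat.le_ceil _
      linarith⟩
  refine le_antisymm ?_ zero_le
  calc f.measure (Ioi b) ≤ f.measure (⋃ n : ℕ, Ioc b (b + (n + 1))) := measure_mono hsub
    _ ≤ ∑' n : ℕ, f.measure (Ioc b (b + (n + 1))) := measure_iUnion_le _
    _ = 0 := by
      have : ∀ n : ℕ, f.measure (Ioc b (b + (n + 1))) = 0 := by
        intro n
        rw [f.measure_Ioc, h (b + (n + 1)) (by linarith [Nat.cast_nonneg (α := ℝ) n]), sub_self, ENNReal.ofReal_zero]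
      simp [this]

lemma aux_repr (f : StieltjesFunction ℝ) {b : ℝ} (hb : 0 < b)
    (hint : IntegrableOn Real.log (Ioc 0 b) f.measure) :
    (∫⁻ t in Ioc 0 b, ENNReal.ofReal ((f t - f 0) / t)) ≠ ⊤ ∧
    ∫ x in Ioc 0 b, Real.log x ∂f.measure
      = (f b - f 0) * Real.log b
        - (∫⁻ t in Ioc 0 b, ENNReal.ofReal ((f t - f 0) / t)).toReal := by
  have hI : (∫⁻ t in Ioc 0 b, ENNReal.ofReal ((f t - f 0) / t))
      = ∫⁻ x in Ioc 0 b, ENNReal.ofReal (Real.log b - Real.log x) ∂f.measure := by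
    rw [aux_swap f.measure hb]
    refine setLIntegral_congr_fun measurableSet_Ioc ?_
    intro t ht
    beta_reduce; rw [f.measure_Ioc, ← ENNReal.ofReal_mul (le_of_lt (inv_pos.2 ht.1)), inv_mul_eq_div]
  -- integrability of `log b - log x`
  have hfin : f.measure (Ioc 0 b) < ⊤ := by
    rw [f.measure_Ioc]; exact ENNReal.ofReal_lt_top
  have hgint : IntegrableOn (fun x => Real.log b - Real.log x) (Ioc 0 b) f.measure := by
    exact (integrableOn_const hfin.ne).sub hint
  have hgnn : 0 ≤ᵐ[f.measure.restrict (Ioc 0 b)] fun x => Real.log b - Real.log x := by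
    refine (ae_restrict_iff' measurableSet_Ioc).2 (Filter.Eventually.of_forall ?_)
    intro x hx
    have := Real.log_le_log hx.1 hx.2
    simp only [Pi.zero_apply]; linarith
  have hre : ENNReal.ofReal (∫ x in Ioc 0 b, (Real.log b - Real.log x) ∂f.measure)
      = ∫⁻ x in Ioc 0 b, ENNReal.ofReal (Real.log b - Real.log x) ∂f.measure :=
    ofReal_integral_eq_lintegral_ofReal hgint hgnn
  constructor
  · rw [hI, ← hre]; exact ENNReal.ofReal_ne_top
  · have hsplit : ∫ x in Ioc 0 b, (Real.log b - Real.log x) ∂f.measure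
        = (f b - f 0) * Real.log b - ∫ x in Ioc 0 b, Real.log x ∂f.measure := by
      rw [integral_sub (integrableOn_const (C := Real.log b) hfin.ne) hint]
      rw [setIntegral_const]
      rw [measureReal_def, f.measure_Ioc, ENNReal.toReal_ofReal (by
        have := f.mono (le_of_lt hb); linarith [f.mono hb.le])]
      rw [smul_eq_mul]
    have hnn : 0 ≤ ∫ x in Ioc 0 b, (Real.log b - Real.log x) ∂f.measure :=
      integral_nonneg_of_ae hgnn
    rw [hI, ← hre, ENNReal.toReal_ofReal hnn, hsplit]
    ring

/-- The determinant of a density function `F`: `exp (∫_{0⁺}^∞ ln λ dF)` when the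
Lebesgue–Stieltjes integral exists as a real number (the determinantal class), and `0`
otherwise. -/
noncomputable def detF (F : StieltjesFunction ℝ) : ℝ :=
  if IntegrableOn Real.log (Set.Ioi 0) F.measure then
    Real.exp (∫ x in Set.Ioi 0, Real.log x ∂F.measure)
  else 0

theorem stmt11 (F : ℕ → StieltjesFunction ℝ)
    -- each `F k` is a density function (increasing, right continuous, nonnegative on `[0,∞)`,
    -- eventually constant) in the determinantal class:
    (hnonneg : ∀ k, ∀ x : ℝ, 0 ≤ x → 0 ≤ F k x)
    (hevconst : ∀ k, ∃ Ck : ℝ, ∀ x : ℝ, Ck < x → F k x = F k Ck)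
    (hdetk : ∀ k, IntegrableOn Real.log (Set.Ioi 0) (F k).measure)
    -- `G` is `F⁺`, the right-continuous regularization of `F(λ) = liminf_k F_k(λ)`:
    (G : StieltjesFunction ℝ)
    (hG : ∀ x : ℝ, G x = Function.rightLim (fun y => liminf (fun k => F k y) atTop) x)
    -- `F⁺` is in the determinantal class:
    (hdetG : IntegrableOn Real.log (Set.Ioi 0) G.measure)
    -- (a) all the `F k` agree beyond some constant `C`:
    (C : ℝ) (hC : ∀ k l : ℕ, ∀ x : ℝ, C < x → F k x = F l x)
    -- (b) `lim_k F_k(0) = F⁺(0)`: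
    (h0 : Tendsto (fun k => F k 0) atTop (nhds (G 0))) :
    limsup (fun k => detF (F k)) atTop ≤ detF G := by
  obtain ⟨C0, hC0⟩ := hevconst 0
  set b : ℝ := max (max C C0) 0 + 1 with hbdef
  have hb0 : 0 < b := by
    have := le_max_right (max C C0) 0; simp only [hbdef]; linarith
  have hbC : C < b := by
    have h1 := le_max_left C C0; have h2 := le_max_left (max C C0) 0
    simp only [hbdef]; linarith
  have hbC0 : C0 < b := by
    have h1 := le_max_right C C0; have h2 := le_max_left (max C C0) 0
    simp only [hbdef]; linarith
  have hFkb : ∀ k, F k b = F 0 b := fun k => hC k 0 b hbC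
  set h : ℝ → ℝ := fun y => liminf (fun k => F k y) atTop with hhdef
  have hub : ∀ a : ℝ, ∀ k, F k a ≤ F 0 (max a C + 1) := by
    intro a k
    have h1 : a ≤ max a C + 1 := by have := le_max_left a C; linarith
    have h2 : C < max a C + 1 := by have := le_max_right a C; linarith
    calc F k a ≤ F k (max a C + 1) := (F k).mono h1
      _ = F 0 (max a C + 1) := hC k 0 _ h2
  have hbddabove : ∀ a : ℝ, IsBoundedUnder (· ≤ ·) atTop (fun k => F k a) :=
    fun a => isBoundedUnder_of ⟨F 0 (max a C + 1), hub a⟩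
  have hbddbelow : ∀ a : ℝ, 0 ≤ a → IsBoundedUnder (· ≥ ·) atTop (fun k => F k a) :=
    fun a ha => isBoundedUnder_of ⟨0, fun k => hnonneg k a ha⟩
  have hmono : ∀ s t : ℝ, 0 ≤ s → s ≤ t → h s ≤ h t := by
    intro s t hs hst
    exact liminf_le_liminf (Filter.Eventually.of_forall (fun k => (F k).mono hst))
      (hbddbelow s hs) ((hbddabove t).isCoboundedUnder_ge)
  set h' : ℝ → ℝ := fun t => h (max t 0) with hh'def
  have hmono' : Monotone h' := fun s t hst =>
    hmono _ _ (le_max_right _ _) (max_le_max hst le_rfl)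
  have hGh' : ∀ x : ℝ, 0 ≤ x → G x = Function.rightLim h' x := by
    intro x hx
    rw [hG x]
    have ht' : Tendsto h' (𝓝[>] x) (𝓝 (Function.rightLim h' x)) := hmono'.tendsto_rightLim x
    have heq : h' =ᶠ[𝓝[>] x] (fun y => liminf (fun k => F k y) atTop) := by
      filter_upwards [self_mem_nhdsWithin] with y hy
      have : max y 0 = y := max_eq_left (le_of_lt (lt_of_le_of_lt hx hy))
      simp only [hh'def, hhdef, this]
    exact rightLim_eq_of_tendsto (ht'.congr' heq)
  have hhF0 : ∀ y, C < y → h y = F 0 y := by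
    intro y hy
    have hconst : (fun k => F k y) = fun _ => F 0 y := funext fun k => hC k 0 y hy
    simp only [hhdef, hconst, liminf_const]
  have hGC : ∀ x, C < x → G x = F 0 x := by
    intro x hx
    rw [hG x]
    have ht0 : Tendsto (F 0) (𝓝[>] x) (𝓝 (F 0 x)) :=
      ((F 0).right_continuous x).mono (Ioi_subset_Ici le_rfl)
    have heq : (F 0 : ℝ → ℝ) =ᶠ[𝓝[>] x] (fun y => liminf (fun k => F k y) atTop) := by
      filter_upwards [self_mem_nhdsWithin] with y hy
      exact (hhF0 y (hx.trans hy)).symm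
    exact rightLim_eq_of_tendsto (ht0.congr' heq)
  -- tails are null
  have htail : ∀ k, (F k).measure (Ioi b) = 0 := by
    intro k
    refine aux_tail (F k) ?_
    intro x hx
    rw [hC k 0 x (hbC.trans hx), hFkb k, hC0 x (hbC0.trans hx), hC0 b hbC0]
  have htailG : G.measure (Ioi b) = 0 := by
    refine aux_tail G ?_
    intro x hx
    rw [hGC x (hbC.trans hx), hGC b hbC, hC0 x (hbC0.trans hx), hC0 b hbC0]
  have hsetae : ∀ μ : Measure ℝ, μ (Ioi b) = 0 → (Ioi (0:ℝ) : Set ℝ) =ᵐ[μ] Ioc 0 b := by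
    intro μ hμ
    rw [MeasureTheory.ae_eq_set]
    constructor
    · have hd : Ioi (0:ℝ) \ Ioc 0 b = Ioi b := by
        ext x
        simp only [mem_diff, mem_Ioi, mem_Ioc, not_and, not_le]
        constructor
        · rintro ⟨h1, h2⟩; exact h2 h1
        · intro h1; exact ⟨hb0.trans h1, fun _ => h1⟩
      rw [hd]; exact hμ
    · rw [diff_eq_empty.2 Ioc_subset_Ioi_self]; exact measure_empty
  set Ik : ℕ → ℝ≥0∞ := fun k => ∫⁻ t in Ioc 0 b, ENNReal.ofReal ((F k t - F k 0) / t)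
    with hIkdef
  set IG : ℝ≥0∞ := ∫⁻ t in Ioc 0 b, ENNReal.ofReal ((G t - G 0) / t) with hIGdef
  have hreprk := fun k => aux_repr (F k) hb0 ((hdetk k).mono_set Ioc_subset_Ioi_self)
  have hreprG := aux_repr G hb0 (hdetG.mono_set Ioc_subset_Ioi_self)
  have hdet1 : ∀ k, detF (F k)
      = Real.exp ((F 0 b - F k 0) * Real.log b - (Ik k).toReal) := by
    intro k
    rw [detF, if_pos (hdetk k),
      setIntegral_congr_set (hsetae (F k).measure (htail k)), (hreprk k).2, hFkb k]
  have hdetGval : detF G = Real.exp ((F 0 b - G 0) * Real.log b - IG.toReal) := by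
    rw [detF, if_pos hdetG, setIntegral_congr_set (hsetae G.measure htailG), hreprG.2,
      hGC b hbC]
  -- Fatou
  have hmeasFk : ∀ k, Measurable (fun t : ℝ => ENNReal.ofReal ((F k t - F k 0) / t)) := by
    intro k
    exact ENNReal.measurable_ofReal.comp
      (((F k).mono.measurable.sub measurable_const).div measurable_id)
  have hN : volume {x : ℝ | ¬ContinuousAt h' x} = 0 :=
    Set.Countable.measure_zero hmono'.countable_not_continuousAt volume
  have haecont : ∀ᵐ t ∂(volume.restrict (Ioc (0:ℝ) b)), ContinuousAt h' t := by
    refine ae_restrict_of_ae ?_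
    rw [ae_iff]
    convert hN using 2
  have hae : ∀ᵐ t ∂(volume.restrict (Ioc (0:ℝ) b)),
      ENNReal.ofReal ((G t - G 0) / t)
        ≤ liminf (fun k => ENNReal.ofReal ((F k t - F k 0) / t)) atTop := by
    filter_upwards [haecont, ae_restrict_mem measurableSet_Ioc] with t hcont ht
    have hGt : G t = h t := by
      rw [hGh' t ht.1.le,
        hmono'.continuousWithinAt_Ioi_iff_rightLim_eq.1 hcont.continuousWithinAt]
      simp only [hh'def, max_eq_left ht.1.le]
    refine ENNReal.le_of_forall_pos_le_add ?_
    intro ε hε _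
    have hεt : 0 < (ε : ℝ) * t / 2 :=
      div_pos (mul_pos (by exact_mod_cast hε) ht.1) two_pos
    have ev1 : ∀ᶠ k in atTop, h t - (ε : ℝ) * t / 2 < F k t := by
      refine eventually_lt_of_lt_liminf ?_ (hbddbelow t ht.1.le)
      simp only [hhdef]
      linarith [hεt]
    have ev2 : ∀ᶠ k in atTop, F k 0 < G 0 + (ε : ℝ) * t / 2 :=
      h0.eventually_lt_const (by linarith)
    have keyev : ∀ᶠ k in atTop,
        ENNReal.ofReal ((G t - G 0) / t - ε)
          ≤ ENNReal.ofReal ((F k t - F k 0) / t) := by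
      filter_upwards [ev1, ev2] with k h1 h2
      refine ENNReal.ofReal_le_ofReal ?_
      have hstep : G t - G 0 - (ε : ℝ) * t ≤ F k t - F k 0 := by
        rw [hGt]; linarith
      have hdiv : (G t - G 0 - (ε : ℝ) * t) / t ≤ (F k t - F k 0) / t :=
        div_le_div_of_nonneg_right hstep ht.1.le
      have heq2 : (G t - G 0 - (ε : ℝ) * t) / t = (G t - G 0) / t - (ε : ℝ) := by
        rw [sub_div, mul_div_assoc, div_self ht.1.ne', mul_one]
      linarith
    have hlim : ENNReal.ofReal ((G t - G 0) / t - ε)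
        ≤ liminf (fun k => ENNReal.ofReal ((F k t - F k 0) / t)) atTop :=
      le_liminf_of_le (by isBoundedDefault) keyev
    calc ENNReal.ofReal ((G t - G 0) / t)
        = ENNReal.ofReal ((G t - G 0) / t - (ε : ℝ) + (ε : ℝ)) := by rw [sub_add_cancel]
      _ ≤ ENNReal.ofReal ((G t - G 0) / t - (ε : ℝ)) + ENNReal.ofReal (ε : ℝ) :=
          ENNReal.ofReal_add_le
      _ = ENNReal.ofReal ((G t - G 0) / t - (ε : ℝ)) + (ε : ℝ≥0∞) := by
          rw [ENNReal.ofReal_coe_nnreal]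
      _ ≤ liminf (fun k => ENNReal.ofReal ((F k t - F k 0) / t)) atTop + (ε : ℝ≥0∞) := by
          gcongr
  have hfatou : IG ≤ liminf Ik atTop := by
    calc IG ≤ ∫⁻ t in Ioc 0 b,
          liminf (fun k => ENNReal.ofReal ((F k t - F k 0) / t)) atTop :=
        lintegral_mono_ae hae
      _ ≤ liminf Ik atTop := lintegral_liminf_le (fun k => hmeasFk k)
  -- final epsilon argument
  have key : ∀ ε : ℝ, 0 < ε → ∀ᶠ k in atTop,
      (F 0 b - F k 0) * Real.log b - (Ik k).toReal
        ≤ ((F 0 b - G 0) * Real.log b - IG.toReal) + ε := by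
    intro ε hε
    have e1 : Tendsto (fun k => (F 0 b - F k 0) * Real.log b) atTop
        (nhds ((F 0 b - G 0) * Real.log b)) :=
      (tendsto_const_nhds.sub h0).mul_const _
    have ev1 : ∀ᶠ k in atTop,
        (F 0 b - F k 0) * Real.log b < (F 0 b - G 0) * Real.log b + ε / 2 :=
      e1.eventually_lt_const (by linarith)
    have ev2 : ∀ᶠ k in atTop, IG.toReal - ε / 2 ≤ (Ik k).toReal := by
      rcases le_or_gt (IG.toReal - ε / 2) 0 with hle | hpos
      · exact Filter.Eventually.of_forall fun k => hle.trans ENNReal.toReal_nonneg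
      · have hIGfin : IG ≠ ⊤ := hreprG.1
        have hlt : ENNReal.ofReal (IG.toReal - ε / 2) < IG := by
          conv_rhs => rw [← ENNReal.ofReal_toReal hIGfin]
          rw [ENNReal.ofReal_lt_ofReal_iff (by linarith)]
          linarith
        have ev := eventually_lt_of_lt_liminf (lt_of_lt_of_le hlt hfatou)
        filter_upwards [ev] with k hk
        have hIkfin : Ik k ≠ ⊤ := (hreprk k).1
        have htr := ENNReal.toReal_mono hIkfin hk.le
        rwa [ENNReal.toReal_ofReal (by linarith)] at htr
    filter_upwards [ev1, ev2] with k h1 h2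
    linarith
  -- conclude
  have hrw : (fun k => detF (F k))
      = fun k => Real.exp ((F 0 b - F k 0) * Real.log b - (Ik k).toReal) := funext hdet1
  rw [hrw, hdetGval]
  set AG : ℝ := (F 0 b - G 0) * Real.log b - IG.toReal with hAGdef
  have hcob : IsCoboundedUnder (· ≤ ·) atTop
      (fun k => Real.exp ((F 0 b - F k 0) * Real.log b - (Ik k).toReal)) :=
    IsBoundedUnder.isCoboundedUnder_le
      (isBoundedUnder_of ⟨0, fun k => (Real.exp_pos _).le⟩)
  have htend : Tendsto (fun ε : ℝ => Real.exp (AG + ε)) (𝓝[>] 0) (𝓝 (Real.exp AG)) := by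
    have h1 : Tendsto (fun ε : ℝ => Real.exp (AG + ε)) (nhds 0) (nhds (Real.exp AG)) := by
      have hc : Continuous (fun ε : ℝ => Real.exp (AG + ε)) :=
        Real.continuous_exp.comp (continuous_const.add continuous_id)
      have := hc.tendsto (0:ℝ)
      simpa using this
    exact h1.mono_left nhdsWithin_le_nhds
  refine ge_of_tendsto htend ?_
  filter_upwards [self_mem_nhdsWithin] with ε hε
  refine limsup_le_of_le hcob ?_
  filter_upwards [key ε hε] with k hk
  exact Real.exp_le_exp.2 hk
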